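/- arXiv:2005.14340 — 2 statements merged into one kernel-verified Lean document; each statement's English description precedes it below -/
import Mathlib

section
/- For odd N = 2Q+1, if a vector v ∈ ℂ^N satisfies, for all j, the relation ∑_{m=1}^{N} v_m · S'((j−m)h) = 0, where S(x) = sin((Q+1/2)·2πx/a)/(N·sin(πx/a)), h = a/N, then v is a constant vector, i.e. v_ℓ = C for all ℓ and some constant C. -/
open Real

open Finset

namespace KDM

noncomputable def E (N : ℕ) (m : ℤ) : ℂ := Complex.exp (2 * π * Complex.I * m / N)

lemma E_add (N : ℕ) (m k : ℤ) : E N (m + k) = E N m * E N k := by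
  rw [E, E, E, ← Complex.exp_add]
  congr 1
  push_cast
  ring

lemma E_zero (N : ℕ) : E N 0 = 1 := by simp [E]

lemma E_pow (N : ℕ) (m : ℤ) (k : ℕ) : E N m ^ k = E N (m * k) := by
  induction k with
  | zero => simp [E_zero]
  | succ k ih =>
    rw [pow_succ, ih, ← E_add]
    congr 1
    push_cast
    ring

lemma E_eq_one (N : ℕ) (hN : 0 < N) (m : ℤ) (hm : (N:ℤ) ∣ m) : E N m = 1 := by
  obtain ⟨c, rfl⟩ := hm
  rw [E, Complex.exp_eq_one_iff]
  refine ⟨c, ?_⟩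
  have hNc : ((N:ℕ):ℂ) ≠ 0 := Nat.cast_ne_zero.mpr hN.ne'
  field_simp
  push_cast; ring

lemma E_ne_one (N : ℕ) (hN : 0 < N) (m : ℤ) (hm : ¬ (N:ℤ) ∣ m) : E N m ≠ 1 := by
  intro h1
  rw [E, Complex.exp_eq_one_iff] at h1
  obtain ⟨n, hn⟩ := h1
  have hNc : ((N:ℕ):ℂ) ≠ 0 := Nat.cast_ne_zero.mpr hN.ne'
  have hpi : (π:ℂ) ≠ 0 := by exact_mod_cast Real.pi_ne_zero
  have h2I : (2:ℂ) * π * Complex.I ≠ 0 :=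
    mul_ne_zero (mul_ne_zero two_ne_zero hpi) Complex.I_ne_zero
  have hmc : (m:ℂ) = (n:ℂ) * N := by
    field_simp at hn
    linear_combination hn
  have : m = n * N := by exact_mod_cast hmc
  exact hm ⟨n, by linarith⟩

lemma ortho1 (N : ℕ) (hN : 0 < N) (d : ℤ) :
    ∑ j ∈ Finset.Icc (1:ℤ) (N:ℤ), E N (d * j) = if (N:ℤ) ∣ d then (N:ℂ) else 0 := by
  by_cases hd : (N:ℤ) ∣ d
  · rw [if_pos hd]
    rw [Finset.sum_congr rfl fun j _ => E_eq_one N hN (d*j) (hd.mul_right j)]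
    rw [Finset.sum_const, Int.card_Icc]
    simp
  · rw [if_neg hd]
    have hre : ∑ j ∈ Finset.Icc (1:ℤ) (N:ℤ), E N (d * j)
        = ∑ k ∈ Finset.range N, (E N d) ^ (k + 1) := by
      refine Finset.sum_nbij' (fun a => (a - 1).toNat) (fun k => (k:ℤ) + 1) ?_ ?_ ?_ ?_ ?_
      · intro a ha
        simp only [Finset.mem_Icc] at ha
        simp only [Finset.mem_range]
        omega
      · intro k hk
        simp only [Finset.mem_range] at hk
        simp only [Finset.mem_Icc]
        omega
      · intro a ha
        simp only [Finset.mem_Icc] at ha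
        show ((a - 1).toNat : ℤ) + 1 = a
        omega
      · intro k _; simp
      · intro a ha
        simp only [Finset.mem_Icc] at ha
        rw [E_pow]
        congr 1
        have : (((a-1).toNat + 1 : ℕ) : ℤ) = a := by push_cast; omega
        rw [this]
    rw [hre]
    have hEN : (E N d) ^ N = 1 := by
      rw [E_pow]
      exact E_eq_one N hN _ ⟨d, by ring⟩
    have hne1 : E N d ≠ 1 := E_ne_one N hN d hd
    calc ∑ k ∈ Finset.range N, (E N d) ^ (k+1)
        = E N d * ∑ k ∈ Finset.range N, (E N d) ^ k := by
          rw [Finset.mul_sum]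
          exact Finset.sum_congr rfl fun k _ => by ring
      _ = E N d * (((E N d) ^ N - 1) / (E N d - 1)) := by rw [geom_sum_eq hne1]
      _ = 0 := by rw [hEN]; simp

lemma ortho2 (Q : ℕ) (N : ℕ) (hN : N = 2 * Q + 1) (d : ℤ) :
    ∑ k ∈ Finset.Icc (-(Q:ℤ)) (Q:ℤ), E N (d * k) = if (N:ℤ) ∣ d then (N:ℂ) else 0 := by
  have hNpos : 0 < N := by omega
  have hre : ∑ k ∈ Finset.Icc (-(Q:ℤ)) (Q:ℤ), E N (d * k)
      = ∑ j ∈ Finset.Icc (1:ℤ) (N:ℤ), E N (d * j) * E N (-(d * ((Q:ℤ) + 1))) := by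
    refine Finset.sum_nbij' (fun k => k + ((Q:ℤ)+1)) (fun j => j - ((Q:ℤ)+1)) ?_ ?_ ?_ ?_ ?_
    · intro k hk; simp only [Finset.mem_Icc] at hk ⊢; omega
    · intro j hj; simp only [Finset.mem_Icc] at hj ⊢; omega
    · intro k _; ring
    · intro j _; ring
    · intro k _
      show E N (d * k) = E N (d * (k + ((Q:ℤ)+1))) * E N (-(d * ((Q:ℤ)+1)))
      rw [← E_add]
      congr 1
      ring
  rw [hre, ← Finset.sum_mul, ortho1 N hNpos d]
  by_cases hd : (N:ℤ) ∣ d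
  · rw [if_pos hd, E_eq_one N hNpos _ (dvd_neg.mpr (hd.mul_right _)), mul_one]
  · rw [if_neg hd, zero_mul]

lemma dirichlet (Q : ℕ) (θ : ℝ) :
    (∑ n ∈ Finset.Icc (-(Q:ℤ)) (Q:ℤ), Real.cos (n * θ)) * (2 * Real.sin (θ/2))
      = 2 * Real.sin (((Q:ℝ) + 1/2) * θ) := by
  have hre : (∑ n ∈ Finset.Icc (-(Q:ℤ)) (Q:ℤ), Real.cos (n * θ))
      = ∑ k ∈ Finset.range (2*Q+1), Real.cos (((k:ℝ) - Q) * θ) := by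
    refine Finset.sum_nbij' (fun n => (n + Q).toNat) (fun k => (k:ℤ) - Q) ?_ ?_ ?_ ?_ ?_
    · intro n hn; simp only [Finset.mem_Icc] at hn; simp only [Finset.mem_range]; omega
    · intro k hk; simp only [Finset.mem_range] at hk; simp only [Finset.mem_Icc]; omega
    · intro n hn; simp only [Finset.mem_Icc] at hn
      show ((n + (Q:ℤ)).toNat : ℤ) - Q = n
      omega
    · intro k _; simp
    · intro n hn; simp only [Finset.mem_Icc] at hn
      congr 1
      have : (((n + (Q:ℤ)).toNat : ℤ) : ℝ) = (n:ℝ) + Q := by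
        have h2 : ((n + (Q:ℤ)).toNat : ℤ) = n + Q := by omega
        exact_mod_cast congrArg (Int.cast : ℤ → ℝ) h2
      push_cast
      push_cast at this
      rw [this]; ring
  rw [hre, Finset.sum_mul]
  have key : ∀ k ∈ Finset.range (2*Q+1),
      Real.cos (((k:ℝ) - Q) * θ) * (2 * Real.sin (θ/2))
        = (fun k : ℕ => Real.sin (((k:ℝ) - Q - 1/2) * θ)) (k+1)
          - (fun k : ℕ => Real.sin (((k:ℝ) - Q - 1/2) * θ)) k := by
    intro k _
    simp only
    rw [Real.sin_sub_sin]
    push_cast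
    ring_nf
  rw [Finset.sum_congr rfl key, Finset.sum_range_sub (fun k : ℕ => Real.sin (((k:ℝ) - Q - 1/2) * θ)) (2*Q+1)]

  push_cast
  rw [show ((0:ℝ) - Q - 1/2) * θ = -((( Q:ℝ) + 1/2) * θ) by ring, Real.sin_neg]
  ring_nf

noncomputable def P (Q N : ℕ) (a : ℝ) : ℝ → ℝ :=
  fun x => (∑ n ∈ Finset.Icc (-(Q:ℤ)) (Q:ℤ), Real.cos (2 * π * n * x / a)) / N

lemma hasDerivAt_P (Q N : ℕ) (a : ℝ) (x : ℝ) :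
    HasDerivAt (P Q N a)
      ((∑ n ∈ Finset.Icc (-(Q:ℤ)) (Q:ℤ), -(2 * π * n / a) * Real.sin (2 * π * n * x / a)) / N) x := by
  apply HasDerivAt.div_const
  apply HasDerivAt.fun_sum
  intro n _
  have h1 : HasDerivAt (fun x : ℝ => (2*π*n/a) * x) (2*π*n/a) x := by
    simpa using (hasDerivAt_id x).const_mul (2*π*(n:ℝ)/a)
  have h2 := (Real.hasDerivAt_cos ((2*π*(n:ℝ)/a) * x)).comp x h1
  simp only [Function.comp_def] at h2
  have hfun : (fun x : ℝ => Real.cos ((2*π*(n:ℝ)/a) * x)) = fun x => Real.cos (2*π*n*x/a) := by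
    funext y; congr 1; ring
  rw [hfun] at h2
  refine h2.congr_deriv ?_
  rw [show (2*π*(n:ℝ)/a) * x = 2*π*n*x/a by ring]
  ring

lemma S_eq (Q N : ℕ) (hN : N = 2 * Q + 1) (a : ℝ) (ha : 0 < a)
    (S : ℝ → ℝ)
    (hS : ∀ x : ℝ, S x =
      Real.sin (((Q : ℝ) + 1/2) * (2 * π * x / a)) / ((N : ℝ) * Real.sin (π * x / a)))
    (x : ℝ) (hx : Real.sin (π * x / a) ≠ 0) : S x = P Q N a x := by
  have hNne : (N:ℝ) ≠ 0 := by
    have : 0 < N := by omega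
    exact_mod_cast this.ne'
  rw [hS, P]
  have hd := dirichlet Q (2*π*x/a)
  have h1 : ∀ n : ℤ, (n:ℝ) * (2*π*x/a) = 2*π*n*x/a := fun n => by ring
  have h2 : (2*π*x/a)/2 = π*x/a := by ring
  simp only [h1, h2] at hd
  rw [div_eq_div_iff (mul_ne_zero hNne hx) hNne]
  linear_combination (-(N:ℝ)/2) * hd

lemma key_deriv (Q N : ℕ) (hN : N = 2 * Q + 1) (a : ℝ) (ha : 0 < a)
    (h : ℝ) (hh : h = a / N)
    (S : ℝ → ℝ)
    (hS : ∀ x : ℝ, S x =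
      Real.sin (((Q : ℝ) + 1/2) * (2 * π * x / a)) / ((N : ℝ) * Real.sin (π * x / a)))
    (r : ℤ) :
    deriv S ((r:ℝ) * h)
      = (∑ n ∈ Finset.Icc (-(Q:ℤ)) (Q:ℤ), -(2 * π * (n:ℝ) / a) * Real.sin (2 * π * n * r / N)) / N := by
  have hNpos : 0 < N := by omega
  have hNne : (N:ℝ) ≠ 0 := by exact_mod_cast hNpos.ne'
  have hane : a ≠ 0 := ha.ne'
  by_cases hr : (N:ℤ) ∣ r
  · -- grid point is a multiple of a : both sides vanish
    obtain ⟨t, ht⟩ := hr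
    have hsum0 : (∑ n ∈ Finset.Icc (-(Q:ℤ)) (Q:ℤ),
        -(2 * π * (n:ℝ) / a) * Real.sin (2 * π * n * r / N)) = 0 := by
      refine Finset.sum_eq_zero fun n _ => ?_
      have harg : 2 * π * (n:ℝ) * (r:ℝ) / N = ((2*(n*t) : ℤ):ℝ) * π := by
        rw [ht]; push_cast; field_simp
      rw [harg, Real.sin_int_mul_pi, mul_zero]
    have hx : (r:ℝ) * h = (t:ℝ) * a := by
      rw [ht, hh]; push_cast; field_simp
    rw [hsum0, zero_div, hx]
    -- S is discontinuous at t*a, so deriv = 0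
    apply deriv_zero_of_not_differentiableAt
    intro hdiff
    have hcont := hdiff.continuousAt
    have hSval : S ((t:ℝ)*a) = 0 := by
      rw [hS]
      have harg : ((Q:ℝ) + 1/2) * (2 * π * ((t:ℝ)*a) / a) = (((N:ℤ)*t : ℤ):ℝ) * π := by
        rw [hN]; push_cast; field_simp
      rw [harg, Real.sin_int_mul_pi, zero_div]
    have hPval : P Q N a ((t:ℝ)*a) = 1 := by
      rw [P]
      have hc : ∀ n ∈ Finset.Icc (-(Q:ℤ)) (Q:ℤ), Real.cos (2 * π * (n:ℝ) * ((t:ℝ)*a) / a) = 1 := by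
        intro n _
        have harg : 2 * π * (n:ℝ) * ((t:ℝ)*a) / a = ((n*t : ℤ):ℝ) * (2*π) := by
          push_cast; field_simp
        rw [harg]
        exact Real.cos_int_mul_two_pi _
      rw [Finset.sum_congr rfl hc, Finset.sum_const, Int.card_Icc]
      have hcard : ((Q:ℤ) + 1 - (-(Q:ℤ))).toNat = N := by omega
      rw [hcard]
      simp [hNne]
    have hev : ∀ᶠ x in nhdsWithin ((t:ℝ)*a) {((t:ℝ)*a)}ᶜ, S x = P Q N a x := by
      have hball : ∀ᶠ x in nhds ((t:ℝ)*a), |x - (t:ℝ)*a| < a := by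
        filter_upwards [Metric.ball_mem_nhds ((t:ℝ)*a) ha] with x hx
        rwa [Metric.mem_ball, Real.dist_eq] at hx
      filter_upwards [self_mem_nhdsWithin, hball.filter_mono nhdsWithin_le_nhds] with x hx1 hx2
      have hx1' : x ≠ (t:ℝ)*a := hx1
      apply S_eq Q N hN a ha S hS
      intro h0
      rw [Real.sin_eq_zero_iff] at h0
      obtain ⟨n, hn⟩ := h0
      -- hn : n * π = π * x / a, so x = n * a
      have hn' : (n:ℝ) * π * a = π * x := by
        field_simp at hn
        rw [← hn]; ring
      have hx' : (n:ℝ) * a = x :=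
        mul_left_cancel₀ Real.pi_ne_zero (by linear_combination hn')
      have h3 : |(n:ℝ) - (t:ℝ)| * a < a := by
        calc |(n:ℝ) - (t:ℝ)| * a = |((n:ℝ) - (t:ℝ)) * a| := by
              rw [abs_mul, abs_of_pos ha]
          _ = |x - (t:ℝ)*a| := by rw [← hx']; ring_nf
          _ < a := hx2
      have h4 : ((|n - t| : ℤ) : ℝ) < 1 := by
        push_cast
        exact (mul_lt_iff_lt_one_left ha).mp h3
      have h5 : |n - t| < 1 := by exact_mod_cast h4
      have h6 := abs_lt.mp h5
      have : n = t := by omega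
      exact hx1' (by rw [← hx', this])
    have hP1 : Filter.Tendsto (P Q N a) (nhdsWithin ((t:ℝ)*a) {((t:ℝ)*a)}ᶜ) (nhds 1) := by
      rw [← hPval]
      exact ((hasDerivAt_P Q N a _).differentiableAt.continuousAt.continuousWithinAt).tendsto
    have hT1 : Filter.Tendsto S (nhdsWithin ((t:ℝ)*a) {((t:ℝ)*a)}ᶜ) (nhds 1) :=
      hP1.congr' (Filter.EventuallyEq.symm hev)
    have hT0 : Filter.Tendsto S (nhdsWithin ((t:ℝ)*a) {((t:ℝ)*a)}ᶜ) (nhds 0) := by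
      rw [← hSval]
      exact hcont.continuousWithinAt.tendsto
    have : (0:ℝ) = 1 := tendsto_nhds_unique hT0 hT1
    norm_num at this
  · -- grid point is not a multiple of a : S agrees with P near it
    have hsin : Real.sin (π * ((r:ℝ) * h) / a) ≠ 0 := by
      intro h0
      rw [Real.sin_eq_zero_iff] at h0
      obtain ⟨n, hn⟩ := h0
      -- hn : n * π = π * (r * h) / a = π * r / N
      apply hr
      refine ⟨n, ?_⟩
      have : (r:ℝ) = (N:ℝ) * n := by
        rw [hh] at hn
        field_simp at hn
        have c1 : π * ((r:ℝ) * a) = π * ((N:ℝ) * (n:ℝ) * a) := by linear_combination (-π*a) * hn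
        have c2 := mul_left_cancel₀ Real.pi_ne_zero c1
        exact mul_right_cancel₀ hane c2
      exact_mod_cast this
    have hev : ∀ᶠ x in nhds ((r:ℝ)*h), S x = P Q N a x := by
      have hc : ContinuousAt (fun x : ℝ => Real.sin (π * x / a)) ((r:ℝ)*h) := by fun_prop
      filter_upwards [hc.eventually_ne hsin] with x hx
      exact S_eq Q N hN a ha S hS x hx
    rw [Filter.EventuallyEq.deriv_eq hev, (hasDerivAt_P Q N a ((r:ℝ)*h)).deriv]
    congr 1
    refine Finset.sum_congr rfl fun n _ => ?_
    congr 2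
    rw [hh]
    field_simp

lemma csin (N : ℕ) (n r : ℤ) : Complex.sin (2*(π:ℂ)*(n:ℂ)*(r:ℂ)/(N:ℂ))
    = (E N (-(n*r)) - E N (n*r)) * Complex.I / 2 := by
  have e1 : Complex.exp (-(2*(π:ℂ)*(n:ℂ)*(r:ℂ)/(N:ℂ)) * Complex.I) = E N (-(n*r)) := by
    rw [E]; congr 1; push_cast; ring
  have e2 : Complex.exp ((2*(π:ℂ)*(n:ℂ)*(r:ℂ)/(N:ℂ)) * Complex.I) = E N (n*r) := by
    rw [E]; congr 1; push_cast; ring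
  rw [Complex.sin, e1, e2]

lemma centry (Q N : ℕ) (hN : N = 2 * Q + 1) (a : ℝ) (ha : 0 < a)
    (h : ℝ) (hh : h = a / N)
    (S : ℝ → ℝ)
    (hS : ∀ x : ℝ, S x =
      Real.sin (((Q : ℝ) + 1/2) * (2 * π * x / a)) / ((N : ℝ) * Real.sin (π * x / a)))
    (r : ℤ) :
    ((deriv S ((r:ℝ) * h) : ℝ) : ℂ)
      = (2*(π:ℂ)*Complex.I/(a*N)) * ∑ n ∈ Finset.Icc (-(Q:ℤ)) (Q:ℤ), (n:ℂ) * E N (n*r) := by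
  rw [key_deriv Q N hN a ha h hh S hS r]
  have hcast : (((∑ n ∈ Finset.Icc (-(Q:ℤ)) (Q:ℤ),
        -(2 * π * (n:ℝ) / a) * Real.sin (2 * π * n * r / N)) / N : ℝ) : ℂ)
      = (∑ n ∈ Finset.Icc (-(Q:ℤ)) (Q:ℤ),
          ((-(2 * π * (n:ℝ) / a) * Real.sin (2 * π * (n:ℝ) * (r:ℝ) / N) : ℝ) : ℂ)) / (N:ℂ) := by
    push_cast
    ring
  rw [hcast]
  have hterm : ∀ n ∈ Finset.Icc (-(Q:ℤ)) (Q:ℤ),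
      ((-(2 * π * (n:ℝ) / a) * Real.sin (2 * π * (n:ℝ) * (r:ℝ) / N) : ℝ) : ℂ)
        = ((π:ℂ)*Complex.I/a) * ((n:ℂ) * E N (n*r))
          - ((π:ℂ)*Complex.I/a) * ((n:ℂ) * E N (-(n*r))) := by
    intro n _
    have hc : ((Real.sin (2 * π * (n:ℝ) * (r:ℝ) / N) : ℝ) : ℂ)
        = Complex.sin (2*(π:ℂ)*(n:ℂ)*(r:ℂ)/(N:ℂ)) := by
      rw [Complex.ofReal_sin]
      congr 1
      push_cast
      ring
    push_cast only []
    rw [Complex.ofReal_mul, hc, csin]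
    push_cast
    ring
  rw [Finset.sum_congr rfl hterm, Finset.sum_sub_distrib]
  have hneg : ∑ n ∈ Finset.Icc (-(Q:ℤ)) (Q:ℤ), ((π:ℂ)*Complex.I/a) * ((n:ℂ) * E N (-(n*r)))
      = ∑ n ∈ Finset.Icc (-(Q:ℤ)) (Q:ℤ), -(((π:ℂ)*Complex.I/a) * ((n:ℂ) * E N (n*r))) := by
    refine Finset.sum_nbij' (fun n => -n) (fun n => -n) ?_ ?_ ?_ ?_ ?_
    · intro n hn; simp only [Finset.mem_Icc] at hn ⊢; omega
    · intro n hn; simp only [Finset.mem_Icc] at hn ⊢; omega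
    · intro n _; ring
    · intro n _; ring
    · intro n _
      have : E N (-(n*r)) = E N ((-n)*r) := by congr 1; ring
      rw [this]
      push_cast
      ring
  rw [hneg, Finset.sum_neg_distrib, sub_neg_eq_add, ← two_mul, Finset.mul_sum, Finset.mul_sum, Finset.sum_div]
  apply Finset.sum_congr rfl
  intro n _
  have haC : (a:ℂ) ≠ 0 := by exact_mod_cast ha.ne'
  have hNC : ((N:ℕ):ℂ) ≠ 0 := by
    have : 0 < N := by omega
    exact_mod_cast this.ne'
  field_simp

lemma not_dvd (N : ℕ) {d : ℤ} (h1 : d ≠ 0) (h2 : |d| < N) : ¬ (N:ℤ) ∣ d := by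
  intro hd
  have h3 : (N:ℤ) ≤ |d| := Int.le_of_dvd (abs_pos.mpr h1) ((dvd_abs _ _).mpr hd)
  exact absurd h2 (not_lt.mpr h3)

noncomputable def Avec (N : ℕ) (v : ℤ → ℂ) (k : ℤ) : ℂ :=
  ∑ m ∈ Finset.Icc (1:ℤ) (N:ℤ), v m * E N (-(k*m))

end KDM

open KDM in
/-- For odd `N = 2Q+1`, if `v` satisfies `∑_{m=1}^{N} v_m S'((j−m)h) = 0` for all `j`,
where `S(x) = sin((Q+1/2)·2πx/a)/(N sin(πx/a))` and `h = a/N`, then `v` is constant. -/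
theorem kernel_of_differentiation_matrix_is_constant
    (Q : ℕ) (a : ℝ) (ha : 0 < a) (N : ℕ) (hN : N = 2 * Q + 1)
    (h : ℝ) (hh : h = a / N)
    (S : ℝ → ℝ)
    (hS : ∀ x : ℝ, S x =
      Real.sin (((Q : ℝ) + 1/2) * (2 * π * x / a)) / ((N : ℝ) * Real.sin (π * x / a)))
    (v : ℤ → ℂ)
    (hv : ∀ j : ℤ, ∑ m ∈ Finset.Icc (1 : ℤ) (N : ℤ),
      v m * ((deriv S (((j : ℝ) - (m : ℝ)) * h) : ℝ) : ℂ) = 0) :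
    ∃ C : ℂ, ∀ ℓ ∈ Finset.Icc (1 : ℤ) (N : ℤ), v ℓ = C := by
  have hNpos : 0 < N := by omega
  have hNC : ((N:ℕ):ℂ) ≠ 0 := Nat.cast_ne_zero.mpr hNpos.ne'
  have hane : a ≠ 0 := ha.ne'
  have haC : (a:ℂ) ≠ 0 := by exact_mod_cast hane
  have hK : (2*(π:ℂ)*Complex.I/(a*N)) ≠ 0 := by
    apply div_ne_zero
    · exact mul_ne_zero (mul_ne_zero two_ne_zero
        (by exact_mod_cast Real.pi_ne_zero)) Complex.I_ne_zero
    · exact mul_ne_zero haC hNC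
  -- step 1 : Fourier form of the kernel equation
  have step1 : ∀ j : ℤ,
      ∑ n ∈ Finset.Icc (-(Q:ℤ)) (Q:ℤ), (n:ℂ) * E N (n*j) * Avec N v n = 0 := by
    intro j
    have h0 := hv j
    have hentry : ∀ m : ℤ, ((deriv S (((j:ℝ) - (m:ℝ)) * h) : ℝ) : ℂ)
        = (2*(π:ℂ)*Complex.I/(a*N))
            * ∑ n ∈ Finset.Icc (-(Q:ℤ)) (Q:ℤ), (n:ℂ) * E N (n*(j-m)) := by
      intro m
      have hc : ((j:ℝ) - (m:ℝ)) = (((j - m : ℤ)):ℝ) := by push_cast; ring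
      rw [hc]
      exact centry Q N hN a ha h hh S hS (j-m)
    rw [Finset.sum_congr rfl (fun m _ => by rw [hentry m])] at h0
    have hEsplit : ∀ (n m : ℤ), E N (n*(j-m)) = E N (n*j) * E N (-(n*m)) := by
      intro n m
      rw [← E_add]
      congr 1
      ring
    have hcalc : (2*(π:ℂ)*Complex.I/(a*N))
        * ∑ n ∈ Finset.Icc (-(Q:ℤ)) (Q:ℤ), (n:ℂ) * E N (n*j) * Avec N v n = 0 := by
      calc (2*(π:ℂ)*Complex.I/(a*N))
            * ∑ n ∈ Finset.Icc (-(Q:ℤ)) (Q:ℤ), (n:ℂ) * E N (n*j) * Avec N v n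
          = ∑ n ∈ Finset.Icc (-(Q:ℤ)) (Q:ℤ), ∑ m ∈ Finset.Icc (1:ℤ) (N:ℤ),
              v m * ((2*(π:ℂ)*Complex.I/(a*N)) * ((n:ℂ) * E N (n*j) * E N (-(n*m)))) := by
            rw [Finset.mul_sum]
            refine Finset.sum_congr rfl fun n _ => ?_
            rw [Avec, Finset.mul_sum, Finset.mul_sum]
            refine Finset.sum_congr rfl fun m _ => ?_
            ring
        _ = ∑ m ∈ Finset.Icc (1:ℤ) (N:ℤ), ∑ n ∈ Finset.Icc (-(Q:ℤ)) (Q:ℤ),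
              v m * ((2*(π:ℂ)*Complex.I/(a*N)) * ((n:ℂ) * E N (n*j) * E N (-(n*m)))) :=
            Finset.sum_comm
        _ = ∑ m ∈ Finset.Icc (1:ℤ) (N:ℤ),
              v m * ((2*(π:ℂ)*Complex.I/(a*N))
                * ∑ n ∈ Finset.Icc (-(Q:ℤ)) (Q:ℤ), (n:ℂ) * E N (n*(j-m))) := by
            refine Finset.sum_congr rfl fun m _ => ?_
            rw [Finset.mul_sum, Finset.mul_sum]
            refine Finset.sum_congr rfl fun n _ => ?_
            rw [hEsplit]
            ring
        _ = 0 := h0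
    exact (mul_eq_zero.mp hcalc).resolve_left hK
  -- step 2 : all nonzero Fourier coefficients vanish
  have step2 : ∀ k ∈ Finset.Icc (-(Q:ℤ)) (Q:ℤ), k ≠ 0 → Avec N v k = 0 := by
    intro k hk hk0
    simp only [Finset.mem_Icc] at hk
    have hsum : ∑ j ∈ Finset.Icc (1:ℤ) (N:ℤ), E N (-(k*j))
        * ∑ n ∈ Finset.Icc (-(Q:ℤ)) (Q:ℤ), (n:ℂ) * E N (n*j) * Avec N v n = 0 :=
      Finset.sum_eq_zero fun j _ => by rw [step1 j, mul_zero]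
    have hcalc : (k:ℂ) * Avec N v k * N = 0 := by
      calc (k:ℂ) * Avec N v k * N
          = ∑ n ∈ Finset.Icc (-(Q:ℤ)) (Q:ℤ), (n:ℂ) * Avec N v n
              * (if (N:ℤ) ∣ (n - k) then (N:ℂ) else 0) := by
            rw [Finset.sum_eq_single k]
            · rw [if_pos ⟨0, by ring⟩]
            · intro n hn hne
              simp only [Finset.mem_Icc] at hn
              rw [if_neg, mul_zero]
              apply not_dvd N (sub_ne_zero.mpr hne)
              rw [abs_lt]
              omega
            · intro hk'
              exact absurd (Finset.mem_Icc.mpr hk) hk'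
        _ = ∑ n ∈ Finset.Icc (-(Q:ℤ)) (Q:ℤ), (n:ℂ) * Avec N v n
              * ∑ j ∈ Finset.Icc (1:ℤ) (N:ℤ), E N ((n-k)*j) := by
            refine Finset.sum_congr rfl fun n _ => ?_
            rw [ortho1 N hNpos (n-k)]
        _ = ∑ n ∈ Finset.Icc (-(Q:ℤ)) (Q:ℤ), ∑ j ∈ Finset.Icc (1:ℤ) (N:ℤ),
              (n:ℂ) * Avec N v n * E N ((n-k)*j) :=
            Finset.sum_congr rfl fun n _ => Finset.mul_sum _ _ _
        _ = ∑ j ∈ Finset.Icc (1:ℤ) (N:ℤ), ∑ n ∈ Finset.Icc (-(Q:ℤ)) (Q:ℤ),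
              (n:ℂ) * Avec N v n * E N ((n-k)*j) := Finset.sum_comm
        _ = ∑ j ∈ Finset.Icc (1:ℤ) (N:ℤ), E N (-(k*j))
              * ∑ n ∈ Finset.Icc (-(Q:ℤ)) (Q:ℤ), (n:ℂ) * E N (n*j) * Avec N v n := by
            refine Finset.sum_congr rfl fun j _ => ?_
            rw [Finset.mul_sum]
            refine Finset.sum_congr rfl fun n _ => ?_
            have hsplit : E N ((n-k)*j) = E N (n*j) * E N (-(k*j)) := by
              rw [← E_add]; congr 1; ring
            rw [hsplit]; ring
        _ = 0 := hsum
    have hkC : (k:ℂ) ≠ 0 := Int.cast_ne_zero.mpr hk0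
    have := mul_eq_zero.mp hcalc
    rcases this with h1 | h1
    · rcases mul_eq_zero.mp h1 with h2 | h2
      · exact absurd h2 hkC
      · exact h2
    · exact absurd h1 hNC
  -- step 3 : inversion
  have step3 : ∀ m ∈ Finset.Icc (1:ℤ) (N:ℤ), ((N:ℕ):ℂ) * v m = Avec N v 0 := by
    intro m hm
    simp only [Finset.mem_Icc] at hm
    calc ((N:ℕ):ℂ) * v m
        = ∑ m' ∈ Finset.Icc (1:ℤ) (N:ℤ),
            v m' * (if (N:ℤ) ∣ (m - m') then (N:ℂ) else 0) := by
          rw [Finset.sum_eq_single m]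
          · rw [if_pos ⟨0, by ring⟩]
            ring
          · intro m' hm' hne
            simp only [Finset.mem_Icc] at hm'
            rw [if_neg, mul_zero]
            apply not_dvd N (sub_ne_zero.mpr (Ne.symm hne))
            rw [abs_lt]
            omega
          · intro hm'
            exact absurd (Finset.mem_Icc.mpr hm) hm'
      _ = ∑ m' ∈ Finset.Icc (1:ℤ) (N:ℤ),
            v m' * ∑ k ∈ Finset.Icc (-(Q:ℤ)) (Q:ℤ), E N ((m - m')*k) := by
          refine Finset.sum_congr rfl fun m' _ => ?_
          rw [ortho2 Q N hN (m - m')]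
      _ = ∑ m' ∈ Finset.Icc (1:ℤ) (N:ℤ), ∑ k ∈ Finset.Icc (-(Q:ℤ)) (Q:ℤ),
            v m' * E N ((m - m')*k) :=
          Finset.sum_congr rfl fun m' _ => Finset.mul_sum _ _ _
      _ = ∑ k ∈ Finset.Icc (-(Q:ℤ)) (Q:ℤ), ∑ m' ∈ Finset.Icc (1:ℤ) (N:ℤ),
            v m' * E N ((m - m')*k) := Finset.sum_comm
      _ = ∑ k ∈ Finset.Icc (-(Q:ℤ)) (Q:ℤ), E N (k*m) * Avec N v k := by
          refine Finset.sum_congr rfl fun k _ => ?_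
          rw [Avec, Finset.mul_sum]
          refine Finset.sum_congr rfl fun m' _ => ?_
          have hsplit : E N ((m - m')*k) = E N (k*m) * E N (-(k*m')) := by
            rw [← E_add]; congr 1; ring
          rw [hsplit]; ring
      _ = E N (0*m) * Avec N v 0 := by
          rw [Finset.sum_eq_single 0]
          · intro k hk hk0
            rw [step2 k hk hk0, mul_zero]
          · intro h0
            refine absurd ?_ h0
            simp only [Finset.mem_Icc]
            omega
      _ = Avec N v 0 := by
          rw [zero_mul, E_zero, one_mul]
  refine ⟨Avec N v 0 / N, fun ℓ hℓ => ?_⟩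
  have := step3 ℓ hℓ
  rw [eq_div_iff hNC, ← this]
  ring
end

section
/- For odd N, the differentiation matrix T with T_{ij} = S'((i−j)h) is diagonalized by the discrete Fourier basis: for each k with |k| ≤ Q, the vector w_ℓ = e^{2πikℓ/N} satisfies T w = (2πik/a)·w. In particular, the eigenvalues of T are {2πik/a : k = −Q,…,Q}. -/
open Real

open Finset Complex

private lemma sum_cast_mul_pow (z : ℂ) (n : ℕ) :
    (z - 1) * ∑ t ∈ range n, (t : ℂ) * z ^ t
      = ((n : ℂ) - 1) * z ^ n + 1 - ∑ t ∈ range n, z ^ t := by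
  induction n with
  | zero => simp
  | succ n ih =>
    rw [sum_range_succ, sum_range_succ]
    push_cast
    linear_combination ih

private lemma my_geom_sum_zero (z : ℂ) (hz : z ≠ 1) {n : ℕ} (h : z ^ n = 1) :
    ∑ t ∈ range n, z ^ t = 0 := by
  rw [geom_sum_eq hz, h, sub_self, zero_div]

private lemma sum_mul_pow_eq (z : ℂ) (hz : z ≠ 1) {n : ℕ} (h : z ^ n = 1) :
    ∑ t ∈ range n, (t : ℂ) * z ^ t = n / (z - 1) := by
  have h1 := sum_cast_mul_pow z n
  rw [h, my_geom_sum_zero z hz h] at h1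
  have hz' : z - 1 ≠ 0 := sub_ne_zero.mpr hz
  field_simp
  linear_combination h1

private def natShift (Q : ℕ) : ℕ ↪ ℤ :=
  ⟨fun t => (t : ℤ) - Q, fun a b h => by simp only at h; omega⟩

private lemma natShift_apply (Q t : ℕ) : natShift Q t = (t : ℤ) - Q := rfl

private lemma Icc_eq_map (Q : ℕ) :
    Finset.Icc (-(Q:ℤ)) Q = (range (2*Q+1)).map (natShift Q) := by
  ext x
  simp only [Finset.mem_Icc, Finset.mem_map, Finset.mem_range, natShift_apply]
  constructor
  · intro hx; exact ⟨(x + Q).toNat, by omega, by omega⟩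
  · rintro ⟨t, ht, rfl⟩; omega

private lemma sum_Icc_int_zero (Q : ℕ) : ∑ κ ∈ Finset.Icc (-(Q:ℤ)) Q, κ = 0 := by
  have h : ∑ κ ∈ Finset.Icc (-(Q:ℤ)) Q, κ = ∑ κ ∈ Finset.Icc (-(Q:ℤ)) Q, -κ := by
    refine Finset.sum_equiv (Equiv.neg ℤ) (fun i => ?_) (fun i _ => by simp)
    simp only [Finset.mem_Icc, Equiv.neg_apply]
    omega
  rw [Finset.sum_neg_distrib] at h
  omega

private lemma sum_zsmul_zpow (Q : ℕ) (z : ℂ) (hz0 : z ≠ 0) (hz : z ≠ 1)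
    (h : z ^ (2*Q+1) = 1) :
    ∑ κ ∈ Finset.Icc (-(Q:ℤ)) Q, (κ : ℂ) * z ^ κ
      = (2*Q+1 : ℂ) * z ^ (-(Q:ℤ)) / (z - 1) := by
  rw [Icc_eq_map Q, Finset.sum_map]
  simp only [natShift_apply]
  have e1 : ∀ t : ℕ, (((t:ℤ) - (Q:ℤ) : ℤ) : ℂ) * z ^ ((t:ℤ) - (Q:ℤ))
      = z ^ (-(Q:ℤ)) * ((t:ℂ) * z ^ t) - (Q:ℂ) * (z ^ (-(Q:ℤ)) * z ^ t) := by
    intro t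
    rw [sub_eq_add_neg, zpow_add₀ hz0, zpow_natCast]
    push_cast
    ring
  rw [Finset.sum_congr rfl fun t _ => e1 t, Finset.sum_sub_distrib, ← Finset.mul_sum,
    ← Finset.mul_sum, ← Finset.mul_sum, sum_mul_pow_eq z hz h, my_geom_sum_zero z hz h]
  push_cast
  ring

private lemma key_sin (Q N : ℕ) (hNQ : N = 2*Q+1) (m : ℤ) :
    (Complex.exp (2*(π:ℂ)*Complex.I*m/(N:ℂ)) - 1) * (-1:ℂ)^m
      = 2*Complex.I*((Real.sin ((m:ℝ)*π/(N:ℝ)) : ℝ) : ℂ)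
        * Complex.exp (2*(π:ℂ)*Complex.I*m/(N:ℂ)) ^ (-(Q:ℤ)) := by
  have hN0 : (N:ℂ) ≠ 0 := Nat.cast_ne_zero.mpr (by omega)
  have hNC : (N:ℂ) = 2*(Q:ℂ)+1 := by rw [hNQ]; push_cast; ring
  set c : ℂ := 2*(π:ℂ)*Complex.I*m/(N:ℂ) with hc
  set x : ℂ := (m:ℂ)*(π:ℂ)/(N:ℂ) with hx
  have h1 : (-1:ℂ)^m = Complex.exp (↑m*((π:ℂ)*Complex.I)) := by
    rw [Complex.exp_int_mul, Complex.exp_pi_mul_I]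
  have h2 : Complex.exp c ^ (-(Q:ℤ)) = Complex.exp (((-(Q:ℤ) : ℤ):ℂ)*c) := by
    rw [Complex.exp_int_mul]
  have h3 : ((Real.sin ((m:ℝ)*π/(N:ℝ)) : ℝ) : ℂ) = Complex.sin x := by
    rw [Complex.ofReal_sin]
    congr 1
    push_cast
    ring
  have h4 : 2*Complex.I*Complex.sin x = Complex.exp (x*Complex.I) - Complex.exp (-x*Complex.I) := by
    linear_combination Complex.I * Complex.two_sin x
      + (Complex.exp (-x*Complex.I) - Complex.exp (x*Complex.I)) * Complex.I_sq
  rw [h1, h2, h3]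
  rw [show 2*Complex.I*Complex.sin x * Complex.exp (((-(Q:ℤ) : ℤ):ℂ)*c)
      = (2*Complex.I*Complex.sin x) * Complex.exp (((-(Q:ℤ) : ℤ):ℂ)*c) from by ring, h4]
  rw [sub_mul, sub_mul, one_mul, ← Complex.exp_add, ← Complex.exp_add, ← Complex.exp_add]
  have eA : c + ↑m*((π:ℂ)*Complex.I)
      = (x*Complex.I + ((-(Q:ℤ) : ℤ):ℂ)*c) + ↑m*(2*(π:ℂ)*Complex.I) := by
    have hN0' : (2*(Q:ℂ)+1) ≠ 0 := hNC ▸ hN0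
    rw [hc, hx, hNC]
    field_simp
    push_cast
    ring
  have eB : (↑m*((π:ℂ)*Complex.I) : ℂ)
      = (-x*Complex.I + ((-(Q:ℤ) : ℤ):ℂ)*c) + ↑m*(2*(π:ℂ)*Complex.I) := by
    have hN0' : (2*(Q:ℂ)+1) ≠ 0 := hNC ▸ hN0
    rw [hc, hx, hNC]
    field_simp
    push_cast
    ring
  rw [eA, eB]
  simp only [Complex.exp_add, Complex.exp_int_mul_two_pi_mul_I, mul_one]

private lemma Sd_eq (Q N : ℕ) (hNQ : N = 2*Q+1) (a : ℝ) (ha : a ≠ 0) (m : ℤ) :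
    (Complex.ofReal (if (m : ZMod N) = 0 then (0:ℝ)
        else (π / a) * (-1:ℝ)^m / Real.sin ((m:ℝ)*π/(N:ℝ))))
      = 2*(π:ℂ)*Complex.I/((a:ℂ)*(N:ℂ))
        * ∑ κ ∈ Finset.Icc (-(Q:ℤ)) Q,
            (κ:ℂ) * Complex.exp (2*(π:ℂ)*Complex.I/(N:ℂ)) ^ (κ*m) := by
  have hNne : N ≠ 0 := by omega
  have hN0 : (N:ℂ) ≠ 0 := Nat.cast_ne_zero.mpr hNne
  have hN0R : (N:ℝ) ≠ 0 := Nat.cast_ne_zero.mpr hNne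
  set z : ℂ := Complex.exp (2*(π:ℂ)*Complex.I/(N:ℂ)) with hzdef
  have hprim : IsPrimitiveRoot z N := by
    rw [hzdef]; exact Complex.isPrimitiveRoot_exp N hNne
  have hz0 : z ≠ 0 := Complex.exp_ne_zero _
  have hrw : ∀ κ : ℤ, z ^ (κ*m) = (z^m)^κ := by
    intro κ; rw [mul_comm, zpow_mul]
  rw [Finset.sum_congr rfl fun κ _ => by rw [hrw κ]]
  by_cases hdvd : (N:ℤ) ∣ m
  · rw [if_pos (by rwa [ZMod.intCast_zmod_eq_zero_iff_dvd])]
    have hzm : z ^ m = 1 := (hprim.zpow_eq_one_iff_dvd m).mpr hdvd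
    simp only [hzm, one_zpow, mul_one]
    have : ∑ κ ∈ Finset.Icc (-(Q:ℤ)) Q, (κ:ℂ)
        = ((∑ κ ∈ Finset.Icc (-(Q:ℤ)) Q, κ : ℤ) : ℂ) := by push_cast; ring
    rw [this, sum_Icc_int_zero, Int.cast_zero, mul_zero, Complex.ofReal_zero]
  · rw [if_neg (by simpa [ZMod.intCast_zmod_eq_zero_iff_dvd] using hdvd)]
    set ζ : ℂ := z ^ m with hζdef
    have hζ0 : ζ ≠ 0 := zpow_ne_zero _ hz0
    have hζ1 : ζ ≠ 1 := fun h => hdvd ((hprim.zpow_eq_one_iff_dvd m).mp h)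
    have hζN : ζ ^ (2*Q+1) = 1 := by
      rw [hζdef, ← zpow_natCast, ← zpow_mul, mul_comm, zpow_mul, zpow_natCast, ← hNQ,
        hprim.pow_eq_one, one_zpow]
    rw [sum_zsmul_zpow Q ζ hζ0 hζ1 hζN]
    have hζexp : ζ = Complex.exp (2*(π:ℂ)*Complex.I*m/(N:ℂ)) := by
      rw [hζdef, hzdef, ← Complex.exp_int_mul]
      congr 1
      ring
    have hs : Real.sin ((m:ℝ)*π/(N:ℝ)) ≠ 0 := by
      intro h0
      rcases Real.sin_eq_zero_iff.mp h0 with ⟨n, hn⟩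
      rw [eq_div_iff hN0R] at hn
      have h3 : ((n*N:ℤ):ℝ)*π = ((m:ℤ):ℝ)*π := by push_cast; linarith
      have h4 : (n*N:ℤ) = m := by exact_mod_cast mul_right_cancel₀ Real.pi_ne_zero h3
      exact hdvd (h4 ▸ dvd_mul_left (N:ℤ) n)
    have hK := key_sin Q N hNQ m
    rw [← hζexp] at hK
    have hζ1' : ζ - 1 ≠ 0 := sub_ne_zero.mpr hζ1
    have hNC : ((N:ℂ)) = 2*(Q:ℂ)+1 := by rw [hNQ]; push_cast; ring
    rw [← hNC]
    have hsC : Complex.sin ((m:ℂ)*(π:ℂ)/(N:ℂ)) ≠ 0 := by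
      rw [show ((m:ℂ)*(π:ℂ)/(N:ℂ)) = (((m:ℝ)*π/(N:ℝ) : ℝ) : ℂ) from by push_cast; ring,
        ← Complex.ofReal_sin]
      exact_mod_cast hs
    have haC : (a:ℂ) ≠ 0 := by exact_mod_cast ha
    push_cast at hK ⊢
    set u : ℂ := ζ ^ (-(Q:ℤ)) with hu
    field_simp [hsC]
    rw [mul_comm (π:ℂ) (m:ℂ)]
    field_simp [hsC]
    linear_combination hK

/-- For odd `N = 2Q+1`, the spectral differentiation matrix is diagonalized by the discrete
Fourier basis: for `|k| ≤ Q`, the vector `w_ℓ = e^{2πikℓ/N}` satisfies `T w = (2πik/a) w`. -/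
theorem differentiation_matrix_diagonalized_by_fourier
    (Q : ℕ) (a : ℝ) (ha : 0 < a) (N : ℕ) (hN : N = 2 * Q + 1)
    (Sd : ℤ → ℝ)
    (hSd : ∀ j : ℤ, Sd j =
      if (j : ZMod N) = 0 then 0 else (π / a) * (-1 : ℝ) ^ j / Real.sin ((j : ℝ) * π / N))
    (T : Matrix (Fin N) (Fin N) ℝ)
    (hT : ∀ i j : Fin N, T i j = Sd ((i : ℤ) - (j : ℤ)))
    (k : ℤ) (hk : |k| ≤ (Q : ℤ))
    (w : Fin N → ℂ)
    (hw : ∀ ℓ : Fin N, w ℓ = Complex.exp (2 * (π : ℂ) * Complex.I * (k : ℂ) * (ℓ : ℂ) / (N : ℂ))) :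
    (T.map (fun x : ℝ => (x : ℂ))).mulVec w = (2 * (π : ℂ) * Complex.I * (k : ℂ) / (a : ℂ)) • w := by
  have hNne : N ≠ 0 := by omega
  have hN0 : (N:ℂ) ≠ 0 := Nat.cast_ne_zero.mpr hNne
  have haC : (a:ℂ) ≠ 0 := by exact_mod_cast ha.ne'
  set z : ℂ := Complex.exp (2*(π:ℂ)*Complex.I/(N:ℂ)) with hzdef
  have hprim : IsPrimitiveRoot z N := Complex.isPrimitiveRoot_exp N hNne
  have hz0 : z ≠ 0 := Complex.exp_ne_zero _
  have hzpowN : ∀ d : ℤ, (z^d)^N = 1 := by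
    intro d
    rw [← zpow_natCast, ← zpow_mul, mul_comm, zpow_mul, zpow_natCast, hprim.pow_eq_one, one_zpow]
  have hwz : ∀ ℓ : Fin N, w ℓ = z ^ (k*(ℓ:ℤ)) := by
    intro ℓ
    rw [hw, hzdef, ← Complex.exp_int_mul]
    congr 1
    push_cast
    ring
  -- entrywise
  funext i
  simp only [Matrix.mulVec, dotProduct, Matrix.map_apply, Pi.smul_apply, smul_eq_mul]
  have hSdC : ∀ m : ℤ, ((Sd m : ℝ) : ℂ)
      = 2*(π:ℂ)*Complex.I/((a:ℂ)*(N:ℂ)) * ∑ κ ∈ Finset.Icc (-(Q:ℤ)) Q, (κ:ℂ) * z ^ (κ*m) := by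
    intro m
    rw [hSd m, hzdef]
    exact Sd_eq Q N hN a ha.ne' m
  have step1 : ∀ j : Fin N, ((T i j : ℝ) : ℂ) * w j
      = 2*(π:ℂ)*Complex.I/((a:ℂ)*(N:ℂ))
        * ∑ κ ∈ Finset.Icc (-(Q:ℤ)) Q, (κ:ℂ) * z ^ (κ*(i:ℤ)) * (z ^ (k - κ)) ^ (j:ℕ) := by
    intro j
    rw [hT, hSdC, hwz, mul_assoc, Finset.sum_mul]
    congr 1
    refine Finset.sum_congr rfl fun κ _ => ?_
    have : z ^ (κ*((i:ℤ)-(j:ℤ))) * z ^ (k*(j:ℤ)) = z ^ (κ*(i:ℤ)) * (z ^ (k - κ)) ^ (j:ℕ) := by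
      rw [← zpow_natCast (z ^ (k-κ)), ← zpow_mul, ← zpow_add₀ hz0, ← zpow_add₀ hz0]
      congr 1
      ring
    rw [mul_assoc, this, mul_assoc]
  rw [Finset.sum_congr rfl fun j _ => step1 j, ← Finset.mul_sum, Finset.sum_comm]
  have horth : ∀ κ ∈ Finset.Icc (-(Q:ℤ)) Q,
      (∑ j : Fin N, (κ:ℂ) * z ^ (κ*(i:ℤ)) * (z ^ (k - κ)) ^ (j:ℕ))
        = if κ = k then (κ:ℂ) * z ^ (κ*(i:ℤ)) * N else 0 := by
    intro κ hκ
    rw [← Finset.mul_sum]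
    by_cases hκk : κ = k
    · subst hκk
      simp [Finset.card_univ]
    · rw [if_neg hκk]
      have hsum : ∑ j : Fin N, (z ^ (k - κ)) ^ (j:ℕ) = 0 := by
        rw [Fin.sum_univ_eq_sum_range (fun j => (z ^ (k-κ)) ^ j)]
        apply my_geom_sum_zero _ _ (hzpowN (k - κ))
        intro h1
        have hdvd : (N:ℤ) ∣ (k - κ) := (hprim.zpow_eq_one_iff_dvd _).mp h1
        have hd0 : k - κ ≠ 0 := sub_ne_zero.mpr (Ne.symm hκk)
        have hle : (N:ℤ) ≤ |k - κ| := Int.le_of_dvd (abs_pos.mpr hd0) ((dvd_abs _ _).mpr hdvd)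
        simp only [Finset.mem_Icc] at hκ
        have h5 := abs_le.mp hk
        have h8 : |k - κ| ≤ |k| + |κ| := abs_sub k κ
        have h9 : |κ| ≤ (Q:ℤ) := abs_le.mpr hκ
        omega
      rw [hsum, mul_zero]
  rw [Finset.sum_congr rfl horth, Finset.sum_ite_eq' _ k,
    if_pos (by have h5 := abs_le.mp hk; simp only [Finset.mem_Icc]; omega)]
  rw [hwz i]
  field_simp
end
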